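/- Let M be a centrally symmetric convex body in ℝ² with center o. Then there exists a parallelogram S circumscribed about M such that the midpoint of each side of S belongs to M. In particular, a parallelogram of smallest area circumscribed about M has this property. -/

import Mathlib

/-- The closed parallelogram centered at the origin with "half-side" vectors `u`, `v`. -/
def Parall (u v : ℝ × ℝ) : Set (ℝ × ℝ) :=
  {p | ∃ s t : ℝ, |s| ≤ 1 ∧ |t| ≤ 1 ∧ p = s • u + t • v}

noncomputable def det2 (u v : ℝ × ℝ) : ℝ := u.1 * v.2 - u.2 * v.1

lemma det2_smul_right (u : ℝ × ℝ) (s : ℝ) (v : ℝ × ℝ) :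
    det2 u (s • v) = s * det2 u v := by
  simp [det2, Prod.smul_fst, Prod.smul_snd, smul_eq_mul]; ring

lemma det2_neg_right (u p : ℝ × ℝ) : det2 u (-p) = -det2 u p := by
  simp [det2]; ring

lemma det2_neg_left (u p : ℝ × ℝ) : det2 (-u) p = -det2 u p := by
  simp [det2]; ring

lemma det2_swap (u v : ℝ × ℝ) : det2 u v = -det2 v u := by
  simp [det2]; ring

lemma li_iff (u v : ℝ × ℝ) : LinearIndependent ℝ ![u, v] ↔ det2 u v ≠ 0 := by
  rw [linearIndependent_fin2]
  simp only [Matrix.cons_val_one, Matrix.head_cons, Matrix.cons_val_zero]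
  constructor
  · rintro ⟨hv, hav⟩ hd
    rcases eq_or_ne v 0 with rfl | hv0
    · exact hv rfl
    · by_cases h1 : v.1 ≠ 0
      · refine hav (u.1 / v.1) ?_
        have : u.2 * v.1 = u.1 * v.2 := by
          simp [det2] at hd; linarith
        ext <;> simp only [Prod.smul_fst, Prod.smul_snd, smul_eq_mul] <;> field_simp <;> nlinarith [this]
      · push_neg at h1
        have h2 : v.2 ≠ 0 := by
          intro h2; exact hv0 (Prod.ext h1 h2)
        refine hav (u.2 / v.2) ?_
        have : u.1 * v.2 = u.2 * v.1 := by simp [det2] at hd; linarith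
        ext <;> simp only [Prod.smul_fst, Prod.smul_snd, smul_eq_mul] <;> field_simp <;> nlinarith [this]
  · intro hd
    constructor
    · rintro rfl; simp [det2] at hd
    · rintro a rfl
      simp [det2, Prod.smul_fst, Prod.smul_snd, smul_eq_mul] at hd
      exact hd (by ring)

lemma cramer (u v : ℝ × ℝ) (hD : det2 u v ≠ 0) (p : ℝ × ℝ) :
    p = (det2 p v / det2 u v) • u + (det2 u p / det2 u v) • v := by
  have hD' : u.1 * v.2 - u.2 * v.1 ≠ 0 := hD
  ext
  · show p.1 = _ * u.1 + _ * v.1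
    simp only [det2]
    rw [div_mul_eq_mul_div, div_mul_eq_mul_div, ← add_div, eq_div_iff hD']; ring
  · show p.2 = _ * u.2 + _ * v.2
    simp only [det2]
    rw [div_mul_eq_mul_div, div_mul_eq_mul_div, ← add_div, eq_div_iff hD']; ring

lemma mem_parall_iff {u v : ℝ × ℝ} (hD : det2 u v ≠ 0) (p : ℝ × ℝ) :
    p ∈ Parall u v ↔ |det2 p v| ≤ |det2 u v| ∧ |det2 u p| ≤ |det2 u v| := by
  constructor
  · rintro ⟨s, t, hs, ht, rfl⟩
    have h1 : det2 (s • u + t • v) v = s * det2 u v := by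
      simp [det2, Prod.smul_fst, Prod.smul_snd, smul_eq_mul]; ring
    have h2 : det2 u (s • u + t • v) = t * det2 u v := by
      simp [det2, Prod.smul_fst, Prod.smul_snd, smul_eq_mul]; ring
    rw [h1, h2, abs_mul, abs_mul]
    constructor <;> nlinarith [abs_nonneg (det2 u v)]
  · rintro ⟨h1, h2⟩
    refine ⟨det2 p v / det2 u v, det2 u p / det2 u v, ?_, ?_, cramer u v hD p⟩
    · rw [abs_div]; exact div_le_one_of_le₀ h1 (abs_nonneg _)
    · rw [abs_div]; exact div_le_one_of_le₀ h2 (abs_nonneg _)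

lemma parall_comm (u v : ℝ × ℝ) : Parall u v = Parall v u := by
  ext p
  constructor <;> rintro ⟨s, t, hs, ht, rfl⟩ <;> exact ⟨t, s, ht, hs, (add_comm _ _)⟩

lemma parall_neg_left (u v : ℝ × ℝ) : Parall (-u) v = Parall u v := by
  ext p
  constructor <;> rintro ⟨s, t, hs, ht, rfl⟩ <;>
    refine ⟨-s, t, by simpa using hs, ht, by simp⟩

lemma core (M : Set (ℝ × ℝ)) (hMcomp : IsCompact M)
    (hMsymm : ∀ p ∈ M, -p ∈ M) (r : ℝ) (hr : 0 < r)
    (hball : Metric.closedBall (0 : ℝ × ℝ) r ⊆ M)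
    (u v : ℝ × ℝ) (hD : 0 < det2 u v) (hsub : M ⊆ Parall u v)
    (e : ℝ) (he : e = 1 ∨ e = -1)
    (hsign : ∀ p ∈ M, det2 u p = det2 u v → 0 < e * det2 p v) :
    ∃ u' v' : ℝ × ℝ, det2 u' v' ≠ 0 ∧ M ⊆ Parall u' v' ∧
      |det2 u' v'| < |det2 u v| := by
  set D := det2 u v with hDdef
  have hDne : D ≠ 0 := ne_of_gt hD
  have habsD : |D| = D := abs_of_pos hD
  -- bounds on coordinates
  have habs : ∀ p ∈ M, |det2 p v| ≤ D ∧ |det2 u p| ≤ D := by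
    intro p hp
    have := (mem_parall_iff hDne p).mp (hsub hp)
    rwa [habsD] at this
  -- continuity
  have hcontb : Continuous fun p : ℝ × ℝ => det2 u p := by
    unfold det2; fun_prop
  have hconta : Continuous fun p : ℝ × ℝ => det2 p v := by
    unfold det2; fun_prop
  have h0M : (0 : ℝ × ℝ) ∈ M := hball (by simp [le_of_lt hr])
  -- max of b on M
  obtain ⟨p₀, hp₀M, hp₀max⟩ := hMcomp.exists_isMaxOn ⟨0, h0M⟩ hcontb.continuousOn
  set T := det2 u p₀ with hTdef
  have hTmax : ∀ q ∈ M, det2 u q ≤ T := hp₀max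
  -- u ≠ 0
  have hu0 : u ≠ 0 := by
    rintro rfl; apply hDne; rw [hDdef]; simp [det2]
  have hnu : 0 < ‖u‖ := norm_pos_iff.mpr hu0
  -- T > 0
  have hT0 : 0 < T := by
    set q : ℝ × ℝ := (r / ‖u‖) • (-u.2, u.1) with hq
    have hqM : q ∈ M := by
      apply hball
      simp only [Metric.mem_closedBall, dist_zero_right, hq, norm_smul]
      have : ‖((-u.2, u.1) : ℝ × ℝ)‖ = ‖u‖ := by
        simp [Prod.norm_def, max_comm]
      rw [this, Real.norm_eq_abs, abs_of_pos (by positivity)]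
      rw [div_mul_cancel₀ _ (ne_of_gt hnu)]
    have hqb : det2 u q = (r / ‖u‖) * (u.1 ^ 2 + u.2 ^ 2) := by
      simp [det2, hq, Prod.smul_fst, Prod.smul_snd, smul_eq_mul]; ring
    have h1 : 0 < det2 u q := by
      rw [hqb]
      have : 0 < u.1 ^ 2 + u.2 ^ 2 := by
        by_contra hcon
        push_neg at hcon
        have h1 : u.1 = 0 := by nlinarith [sq_nonneg u.1, sq_nonneg u.2]
        have h2 : u.2 = 0 := by nlinarith [sq_nonneg u.1, sq_nonneg u.2]
        exact hu0 (Prod.ext h1 h2)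
      positivity
    exact lt_of_lt_of_le h1 (hTmax q hqM)
  have hTD : T ≤ D := le_trans (le_abs_self _) (habs p₀ hp₀M).2
  rcases lt_or_eq_of_le hTD with hTlt | hTeq
  · -- case T < D : shrink in v direction
    have hTv : det2 u ((T / D) • v) = T := by
      rw [det2_smul_right]; field_simp; exact hDdef.symm
    have hTne : T ≠ 0 := ne_of_gt hT0
    refine ⟨u, (T / D) • v, by rw [hTv]; exact hTne, ?_, ?_⟩
    · intro p hp
      rw [mem_parall_iff (by rw [hTv]; exact hTne), hTv, abs_of_pos hT0,
        det2_smul_right]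
      constructor
      · rw [abs_mul, abs_of_pos (by positivity : (0:ℝ) < T / D)]
        calc T / D * |det2 p v| ≤ T / D * D :=
              mul_le_mul_of_nonneg_left (habs p hp).1 (by positivity)
          _ = T := by field_simp
      · rw [abs_le]
        constructor
        · have h1 := hTmax (-p) (hMsymm p hp)
          rw [det2_neg_right] at h1; linarith
        · exact hTmax p hp
    · rw [hTv, abs_of_pos hT0, habsD]; exact hTlt
  · -- case T = D : contact set, shear
    have he2 : ∀ x : ℝ, |e * x| = |x| := by
      rcases he with rfl | rfl <;> intro x <;> simp [abs_mul]
    have heabs : |e| = 1 := by rcases he with rfl | rfl <;> simp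
    -- contact set S
    have hScomp : IsCompact {p ∈ M | det2 u p = D} :=
      hMcomp.inter_right (isClosed_singleton.preimage hcontb)
    have hSne : ({p ∈ M | det2 u p = D} : Set (ℝ × ℝ)).Nonempty :=
      ⟨p₀, hp₀M, hTeq⟩
    obtain ⟨p₁, hp₁S, hp₁min⟩ := hScomp.exists_isMinOn hSne
      (by fun_prop : Continuous fun p : ℝ × ℝ => e * det2 p v).continuousOn
    set c := e * det2 p₁ v with hcdef
    have hc0 : 0 < c := hsign p₁ hp₁S.1 hp₁S.2
    have hcmin : ∀ p ∈ M, det2 u p = D → c ≤ e * det2 p v := by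
      intro p hp hpD; exact hp₁min ⟨hp, hpD⟩
    -- the η claim
    obtain ⟨η, hη0, hη1, hηP⟩ :
        ∃ η : ℝ, 0 < η ∧ η ≤ D / 2 ∧
          ∀ p ∈ M, D - η ≤ det2 u p → c / 2 ≤ e * det2 p v := by
      set F := {p ∈ M | e * det2 p v ≤ c / 2} with hFdef
      have hFcomp : IsCompact F :=
        hMcomp.inter_right (isClosed_le
          (show Continuous fun p : ℝ × ℝ => e * det2 p v by
            unfold det2; fun_prop) continuous_const)
      rcases F.eq_empty_or_nonempty with hFe | hFne
      · refine ⟨D / 2, by positivity, le_refl _, ?_⟩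
        intro p hp _
        by_contra hcon
        push_neg at hcon
        have hpF : p ∈ F := ⟨hp, le_of_lt hcon⟩
        rw [hFe] at hpF
        exact hpF
      · obtain ⟨q₁, hq₁F, hq₁max⟩ := hFcomp.exists_isMaxOn hFne
          hcontb.continuousOn
        set T' := det2 u q₁ with hT'def
        have hT'lt : T' < D := by
          rcases lt_or_eq_of_le (le_trans (le_abs_self _) (habs q₁ hq₁F.1).2)
            with h | h
          · exact h
          · exfalso
            have := hcmin q₁ hq₁F.1 h
            have := hq₁F.2
            linarith
        refine ⟨min ((D - T') / 2) (D / 2),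
          lt_min (by linarith) (by linarith), min_le_right _ _, ?_⟩
        intro p hp hple
        by_contra hcon
        push_neg at hcon
        have hpF : p ∈ F := ⟨hp, le_of_lt hcon⟩
        have h1 : det2 u p ≤ T' := hq₁max hpF
        have h2 : min ((D - T') / 2) (D / 2) ≤ (D - T') / 2 := min_le_left _ _
        linarith
    -- set up shear parameters
    set ε := η / (2 * D) with hεdef
    have hε0 : 0 < ε := by positivity
    have hεD : ε * D = η / 2 := by rw [hεdef]; field_simp
    set β := max (D - ε * c / 2) (D - η / 2) with hβdef
    have hβlt : β < D :=
      max_lt (sub_lt_self _ (by positivity)) (sub_lt_self _ (by positivity))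
    have hβ0 : 0 < β := by
      have h := le_max_right (D - ε * c / 2) (D - η / 2)
      rw [← hβdef] at h
      linarith
    -- key estimate
    have key : ∀ p ∈ M, |det2 u p - ε * (e * det2 p v)| ≤ β := by
      intro p hp
      set a := det2 p v with hadef
      set b := det2 u p with hbdef
      have ha : |a| ≤ D := (habs p hp).1
      have hb : |b| ≤ D := (habs p hp).2
      have hea : |e * a| ≤ D := by rw [he2]; exact ha
      rw [abs_le] at ha hb hea
      have h4 : ε * (e * a) ≤ ε * D := mul_le_mul_of_nonneg_left hea.2 hε0.le
      have h5 : ε * -D ≤ ε * (e * a) := mul_le_mul_of_nonneg_left hea.1 hε0.le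
      have h6 : ε * -D = -(ε * D) := by ring
      have hl : D - ε * c / 2 ≤ β := le_max_left _ _
      have hrr : D - η / 2 ≤ β := le_max_right _ _
      by_cases h1 : D - η ≤ b
      · have hca : c / 2 ≤ e * a := hηP p hp h1
        have h7 : ε * (c / 2) ≤ ε * (e * a) :=
          mul_le_mul_of_nonneg_left hca hε0.le
        have h8 : ε * (c / 2) = ε * c / 2 := by ring
        rw [abs_le]
        constructor <;> linarith
      · by_cases h2 : b ≤ -(D - η)
        · have hnp : -p ∈ M := hMsymm p hp
          have hca : c / 2 ≤ e * det2 (-p) v := by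
            apply hηP (-p) hnp
            rw [det2_neg_right]
            rw [hbdef] at h2; linarith
          rw [det2_neg_left, mul_neg] at hca
          have hca' : e * a ≤ -(c / 2) := by linarith
          have h7 : ε * (e * a) ≤ ε * -(c / 2) :=
            mul_le_mul_of_nonneg_left hca' hε0.le
          have h8 : ε * -(c / 2) = -(ε * c / 2) := by ring
          rw [abs_le]
          constructor <;> linarith
        · push_neg at h1 h2
          rw [abs_le]
          constructor <;> linarith
    -- conclude
    have hDexp : D = u.1 * v.2 - u.2 * v.1 := hDdef
    have hdet' : det2 (u + (ε * e) • v) ((β / D) • v) = β := by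
      simp only [det2, Prod.fst_add, Prod.snd_add, Prod.smul_fst,
        Prod.smul_snd, smul_eq_mul]
      field_simp
      rw [hDexp]; ring
    have hβne : β ≠ 0 := ne_of_gt hβ0
    refine ⟨u + (ε * e) • v, (β / D) • v, by rw [hdet']; exact hβne, ?_, ?_⟩
    · intro p hp
      rw [mem_parall_iff (by rw [hdet']; exact hβne), hdet', abs_of_pos hβ0]
      constructor
      · rw [det2_smul_right, abs_mul,
          abs_of_pos (by positivity : (0:ℝ) < β / D)]
        calc β / D * |det2 p v| ≤ β / D * D :=
              mul_le_mul_of_nonneg_left (habs p hp).1 (by positivity)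
          _ = β := by field_simp
      · have heq : det2 (u + (ε * e) • v) p
            = det2 u p - ε * (e * det2 p v) := by
          simp only [det2, Prod.fst_add, Prod.snd_add, Prod.smul_fst,
            Prod.smul_snd, smul_eq_mul]
          ring
        rw [heq]
        exact key p hp
    · rw [hdet', abs_of_pos hβ0, habsD]
      exact hβlt

lemma min_v_mem (M : Set (ℝ × ℝ)) (hMcomp : IsCompact M) (hMconv : Convex ℝ M)
    (hMsymm : ∀ p ∈ M, -p ∈ M) (r : ℝ) (hr : 0 < r)
    (hball : Metric.closedBall (0 : ℝ × ℝ) r ⊆ M)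
    (u v : ℝ × ℝ) (hD : det2 u v ≠ 0) (hsub : M ⊆ Parall u v)
    (hmin : ∀ u' v' : ℝ × ℝ, det2 u' v' ≠ 0 → M ⊆ Parall u' v' →
      |det2 u v| ≤ |det2 u' v'|) :
    v ∈ M := by
  -- WLOG det2 u v > 0 by replacing u with -u
  obtain ⟨u₁, hP, hD1, habs1⟩ :
      ∃ u₁ : ℝ × ℝ, Parall u₁ v = Parall u v ∧ 0 < det2 u₁ v ∧
        |det2 u₁ v| = |det2 u v| := by
    rcases hD.lt_or_gt with h | h
    · exact ⟨-u, parall_neg_left u v, by rw [det2_neg_left]; linarith,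
        by rw [det2_neg_left, abs_neg]⟩
    · exact ⟨u, rfl, h, rfl⟩
  set D := det2 u₁ v with hDdef
  have hD1ne : D ≠ 0 := ne_of_gt hD1
  have hsub1 : M ⊆ Parall u₁ v := by rw [hP]; exact hsub
  by_contra hvM
  -- points on the contact line with det2 · v = 0 must be v itself
  have hid : ∀ w ∈ M, det2 u₁ w = D → det2 w v = 0 → False := by
    intro w hw hw1 hw2
    have := cramer u₁ v hD1ne w
    rw [hw1, hw2, zero_div, zero_smul, zero_add, div_self hD1ne,
      one_smul] at this
    exact hvM (this ▸ hw)
  -- sign dichotomy on the contact set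
  have hdich : (∀ p ∈ M, det2 u₁ p = D → 0 < det2 p v) ∨
      (∀ p ∈ M, det2 u₁ p = D → det2 p v < 0) := by
    by_contra hcon
    push_neg at hcon
    obtain ⟨⟨p, hp, hpD, hpa⟩, ⟨q, hq, hqD, hqa⟩⟩ := hcon
    have hpa' : det2 p v < 0 :=
      lt_of_le_of_ne hpa (fun h => hid p hp hpD h)
    have hqa' : 0 < det2 q v :=
      lt_of_le_of_ne hqa (fun h => hid q hq hqD h.symm)
    set l := det2 q v / (det2 q v - det2 p v) with hldef
    have hden : 0 < det2 q v - det2 p v := by linarith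
    have hl0 : 0 ≤ l := by positivity
    have hl1 : 0 ≤ 1 - l := by
      rw [hldef, sub_nonneg, div_le_one hden]; linarith
    have hwM : l • p + (1 - l) • q ∈ M :=
      hMconv hp hq hl0 hl1 (by ring)
    apply hid _ hwM
    · show det2 u₁ (l • p + (1 - l) • q) = D
      have : det2 u₁ (l • p + (1 - l) • q)
          = l * det2 u₁ p + (1 - l) * det2 u₁ q := by
        simp [det2, Prod.smul_fst, Prod.smul_snd, smul_eq_mul]; ring
      rw [this, hpD, hqD]; ring
    · show det2 (l • p + (1 - l) • q) v = 0
      have : det2 (l • p + (1 - l) • q) v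
          = l * det2 p v + (1 - l) * det2 q v := by
        simp [det2, Prod.smul_fst, Prod.smul_snd, smul_eq_mul]; ring
      rw [this, hldef]
      field_simp
      ring
  have hsmaller : ∃ u' v' : ℝ × ℝ, det2 u' v' ≠ 0 ∧ M ⊆ Parall u' v' ∧
      |det2 u' v'| < |det2 u₁ v| := by
    rcases hdich with h | h
    · exact core M hMcomp hMsymm r hr hball u₁ v hD1 hsub1 1 (Or.inl rfl)
        (fun p hp hpD => by rw [one_mul]; exact h p hp hpD)
    · exact core M hMcomp hMsymm r hr hball u₁ v hD1 hsub1 (-1) (Or.inr rfl)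
        (fun p hp hpD => by
          have := h p hp hpD; nlinarith)
  obtain ⟨u', v', h1, h2, h3⟩ := hsmaller
  have := hmin u' v' h1 h2
  rw [← habs1] at this
  linarith

lemma sq_le_fst_snd (w : ℝ × ℝ) : ‖w‖ ^ 2 ≤ w.1 ^ 2 + w.2 ^ 2 := by
  rw [Prod.norm_def]
  rcases max_cases ‖w.1‖ ‖w.2‖ with ⟨h, _⟩ | ⟨h, _⟩ <;> rw [h] <;>
    simp only [Real.norm_eq_abs, sq_abs] <;> nlinarith [sq_nonneg w.1, sq_nonneg w.2]

lemma parall_bound (M : Set (ℝ × ℝ)) (r : ℝ) (hr : 0 < r)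
    (hball : Metric.closedBall (0 : ℝ × ℝ) r ⊆ M)
    (u v : ℝ × ℝ) (hD : det2 u v ≠ 0) (hsub : M ⊆ Parall u v) :
    r * ‖u‖ ≤ |det2 u v| ∧ r * ‖v‖ ≤ |det2 u v| := by
  have hu0 : u ≠ 0 := by rintro rfl; simp [det2] at hD
  have hv0 : v ≠ 0 := by rintro rfl; simp [det2] at hD
  have hnu : 0 < ‖u‖ := norm_pos_iff.mpr hu0
  have hnv : 0 < ‖v‖ := norm_pos_iff.mpr hv0
  constructor
  · -- use point (r/‖u‖) • (-u.2, u.1)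
    set q : ℝ × ℝ := (r / ‖u‖) • (-u.2, u.1) with hq
    have hqM : q ∈ M := by
      apply hball
      simp only [Metric.mem_closedBall, dist_zero_right, hq, norm_smul]
      have h1 : ‖((-u.2, u.1) : ℝ × ℝ)‖ = ‖u‖ := by
        simp [Prod.norm_def, max_comm]
      rw [h1, Real.norm_eq_abs, abs_of_pos (by positivity),
        div_mul_cancel₀ _ (ne_of_gt hnu)]
    have hqd : det2 u q = (r / ‖u‖) * (u.1 ^ 2 + u.2 ^ 2) := by
      simp [det2, hq, Prod.smul_fst, Prod.smul_snd, smul_eq_mul]; ring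
    have h2 : r * ‖u‖ ≤ det2 u q := by
      rw [hqd]
      have h3 := sq_le_fst_snd u
      rw [div_mul_eq_mul_div, le_div_iff₀ hnu]
      nlinarith
    calc r * ‖u‖ ≤ det2 u q := h2
      _ ≤ |det2 u q| := le_abs_self _
      _ ≤ |det2 u v| := ((mem_parall_iff hD q).mp (hsub hqM)).2
  · set q : ℝ × ℝ := (r / ‖v‖) • (v.2, -v.1) with hq
    have hqM : q ∈ M := by
      apply hball
      simp only [Metric.mem_closedBall, dist_zero_right, hq, norm_smul]
      have h1 : ‖((v.2, -v.1) : ℝ × ℝ)‖ = ‖v‖ := by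
        simp [Prod.norm_def, max_comm]
      rw [h1, Real.norm_eq_abs, abs_of_pos (by positivity),
        div_mul_cancel₀ _ (ne_of_gt hnv)]
    have hqd : det2 q v = (r / ‖v‖) * (v.1 ^ 2 + v.2 ^ 2) := by
      simp [det2, hq, Prod.smul_fst, Prod.smul_snd, smul_eq_mul]; ring
    have h2 : r * ‖v‖ ≤ det2 q v := by
      rw [hqd]
      have h3 := sq_le_fst_snd v
      rw [div_mul_eq_mul_div, le_div_iff₀ hnv]
      nlinarith
    calc r * ‖v‖ ≤ det2 q v := h2
      _ ≤ |det2 q v| := le_abs_self _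
      _ ≤ |det2 u v| := ((mem_parall_iff hD q).mp (hsub hqM)).1

lemma exists_min (M : Set (ℝ × ℝ)) (hMcomp : IsCompact M)
    (r R : ℝ) (hr : 0 < r)
    (hball : Metric.closedBall (0 : ℝ × ℝ) r ⊆ M)
    (hR : M ⊆ Metric.closedBall (0 : ℝ × ℝ) R) :
    ∃ u v : ℝ × ℝ, det2 u v ≠ 0 ∧ M ⊆ Parall u v ∧
      ∀ u' v' : ℝ × ℝ, det2 u' v' ≠ 0 → M ⊆ Parall u' v' →
        |det2 u v| ≤ |det2 u' v'| := by
  have hrR : r ≤ R := by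
    have h1 : ((r, 0) : ℝ × ℝ) ∈ Metric.closedBall (0 : ℝ × ℝ) r := by
      simp [Prod.norm_def, abs_of_pos hr, le_of_lt hr]
    have h2 := hR (hball h1)
    simp only [Metric.mem_closedBall, dist_zero_right, Prod.norm_def] at h2
    calc r = max ‖r‖ ‖(0:ℝ)‖ := by simp [abs_of_pos hr, hr.le]
      _ ≤ R := h2
  have hR0 : 0 < R := lt_of_lt_of_le hr hrR
  set C := R * R / r with hC
  set u₀ : ℝ × ℝ := (R, 0) with hu₀
  set v₀ : ℝ × ℝ := (0, R) with hv₀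
  have hdet0 : det2 u₀ v₀ = R * R := by simp [det2, hu₀, hv₀]
  have hdet0ne : det2 u₀ v₀ ≠ 0 := by rw [hdet0]; positivity
  have hsub0 : M ⊆ Parall u₀ v₀ := by
    intro p hp
    rw [mem_parall_iff hdet0ne]
    have hp1 : |p.1| ≤ R := by
      have := hR hp
      simp only [Metric.mem_closedBall, dist_zero_right] at this
      exact le_trans (by rw [← Real.norm_eq_abs]; exact norm_fst_le p) this
    have hp2 : |p.2| ≤ R := by
      have := hR hp
      simp only [Metric.mem_closedBall, dist_zero_right] at this
      exact le_trans (by rw [← Real.norm_eq_abs]; exact norm_snd_le p) this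
    rw [hdet0]
    constructor
    · have h : det2 p v₀ = p.1 * R := by simp [det2, hv₀]
      rw [h, abs_mul, abs_of_pos hR0,
        abs_of_pos (show (0:ℝ) < R * R by positivity)]
      nlinarith [abs_nonneg p.1]
    · have h : det2 u₀ p = R * p.2 := by simp [det2, hu₀]
      rw [h, abs_mul, abs_of_pos hR0,
        abs_of_pos (show (0:ℝ) < R * R by positivity)]
      nlinarith [abs_nonneg p.2]
  set K : Set ((ℝ × ℝ) × (ℝ × ℝ)) :=
    (Metric.closedBall (0 : ℝ × ℝ) C ×ˢ Metric.closedBall (0 : ℝ × ℝ) C) ∩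
      ({w | r * r / 2 ≤ |det2 w.1 w.2|} ∩
        ⋂ p ∈ M, {w | |det2 p w.2| ≤ |det2 w.1 w.2| ∧
          |det2 w.1 p| ≤ |det2 w.1 w.2|}) with hK
  have hcont1 : Continuous fun w : (ℝ × ℝ) × (ℝ × ℝ) => |det2 w.1 w.2| := by
    unfold det2; fun_prop
  have hcont2 : ∀ p : ℝ × ℝ,
      Continuous fun w : (ℝ × ℝ) × (ℝ × ℝ) => |det2 p w.2| := by
    intro p; unfold det2; fun_prop
  have hcont3 : ∀ p : ℝ × ℝ,
      Continuous fun w : (ℝ × ℝ) × (ℝ × ℝ) => |det2 w.1 p| := by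
    intro p; unfold det2; fun_prop
  have hKclosed : IsClosed K := by
    refine (Metric.isClosed_closedBall.prod Metric.isClosed_closedBall).inter
      (IsClosed.inter (isClosed_le continuous_const hcont1) ?_)
    refine isClosed_biInter fun p hp => IsClosed.inter ?_ ?_
    · exact isClosed_le (hcont2 p) hcont1
    · exact isClosed_le (hcont3 p) hcont1
  have hKcomp : IsCompact K :=
    IsCompact.of_isClosed_subset
      (isCompact_closedBall _ _ |>.prod (isCompact_closedBall _ _))
      hKclosed (fun w hw => hw.1)
  have hmem0 : ((u₀, v₀) : (ℝ × ℝ) × (ℝ × ℝ)) ∈ K := by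
    refine ⟨⟨?_, ?_⟩, ?_, ?_⟩
    · simp only [Metric.mem_closedBall, dist_zero_right, hu₀, Prod.norm_def]
      have : max ‖R‖ ‖(0:ℝ)‖ = R := by simp [abs_of_pos hR0, hR0.le]
      rw [this, hC]
      rw [le_div_iff₀ hr]; nlinarith
    · simp only [Metric.mem_closedBall, dist_zero_right, hv₀, Prod.norm_def]
      have : max ‖(0:ℝ)‖ ‖R‖ = R := by simp [abs_of_pos hR0, hR0.le]
      rw [this, hC]
      rw [le_div_iff₀ hr]; nlinarith
    · show r * r / 2 ≤ |det2 u₀ v₀|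
      rw [hdet0, abs_of_pos (by positivity)]
      nlinarith
    · simp only [Set.mem_iInter]
      intro p hp
      exact (mem_parall_iff hdet0ne p).mp (hsub0 hp)
  obtain ⟨w, hwK, hwmin⟩ := hKcomp.exists_isMinOn ⟨(u₀, v₀), hmem0⟩
    hcont1.continuousOn
  have hwforall : ∀ p ∈ M, |det2 p w.2| ≤ |det2 w.1 w.2| ∧
      |det2 w.1 p| ≤ |det2 w.1 w.2| := by
    intro p hp
    have := hwK.2.2
    simp only [Set.mem_iInter] at this
    exact this p hp
  have hwdet : det2 w.1 w.2 ≠ 0 := by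
    have h0 : r * r / 2 ≤ |det2 w.1 w.2| := hwK.2.1
    intro h
    rw [h, abs_zero] at h0
    nlinarith
  refine ⟨w.1, w.2, hwdet, ?_, ?_⟩
  · intro p hp
    rw [mem_parall_iff hwdet]
    exact hwforall p hp
  · intro u' v' hd' hsub'
    by_cases hbig : R * R ≤ |det2 u' v'|
    · calc |det2 w.1 w.2| ≤ |det2 u₀ v₀| := hwmin hmem0
        _ = R * R := by rw [hdet0, abs_of_pos (by positivity)]
        _ ≤ |det2 u' v'| := hbig
    · push_neg at hbig
      obtain ⟨hbu, hbv⟩ := parall_bound M r hr hball u' v' hd' hsub'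
      -- ‖u'‖ ≥ r/2
      have hv'0 : v' ≠ 0 := by rintro rfl; simp [det2] at hd'
      have hnv' : 0 < ‖v'‖ := norm_pos_iff.mpr hv'0
      have habs2 : |det2 u' v'| ≤ 2 * ‖u'‖ * ‖v'‖ := by
        have h1 : |u'.1| ≤ ‖u'‖ := by
          rw [← Real.norm_eq_abs]; exact norm_fst_le u'
        have h2 : |u'.2| ≤ ‖u'‖ := by
          rw [← Real.norm_eq_abs]; exact norm_snd_le u'
        have h3 : |v'.1| ≤ ‖v'‖ := by
          rw [← Real.norm_eq_abs]; exact norm_fst_le v'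
        have h4 : |v'.2| ≤ ‖v'‖ := by
          rw [← Real.norm_eq_abs]; exact norm_snd_le v'
        calc |det2 u' v'| ≤ |u'.1 * v'.2| + |u'.2 * v'.1| := abs_sub _ _
          _ = |u'.1| * |v'.2| + |u'.2| * |v'.1| := by rw [abs_mul, abs_mul]
          _ ≤ ‖u'‖ * ‖v'‖ + ‖u'‖ * ‖v'‖ := by
              nlinarith [abs_nonneg u'.1, abs_nonneg u'.2, abs_nonneg v'.1,
                abs_nonneg v'.2, norm_nonneg u', norm_nonneg v']
          _ = 2 * ‖u'‖ * ‖v'‖ := by ring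
      have hu'low : r / 2 ≤ ‖u'‖ := by nlinarith
      have hKmem : ((u', v') : (ℝ × ℝ) × (ℝ × ℝ)) ∈ K := by
        refine ⟨⟨?_, ?_⟩, ?_, ?_⟩
        · simp only [Metric.mem_closedBall, dist_zero_right]
          rw [hC, le_div_iff₀ hr]
          nlinarith
        · simp only [Metric.mem_closedBall, dist_zero_right]
          rw [hC, le_div_iff₀ hr]
          nlinarith
        · show r * r / 2 ≤ |det2 u' v'|
          nlinarith
        · simp only [Set.mem_iInter]
          intro p hp
          exact (mem_parall_iff hd' p).mp (hsub' hp)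
      exact hwmin hKmem

theorem stmt_14 (M : Set (ℝ × ℝ))
    (hMcomp : IsCompact M) (hMconv : Convex ℝ M) (hMint : (interior M).Nonempty)
    (hMsymm : M = -M) :
    -- there exists a circumscribed parallelogram whose side-midpoints lie in M
    (∃ u v : ℝ × ℝ, LinearIndependent ℝ ![u, v] ∧ M ⊆ Parall u v ∧
      u ∈ M ∧ -u ∈ M ∧ v ∈ M ∧ -v ∈ M) ∧
    -- in particular, any smallest-area parallelogram containing M has this property
    (∀ u v : ℝ × ℝ, LinearIndependent ℝ ![u, v] → M ⊆ Parall u v →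
      (∀ u' v' : ℝ × ℝ, LinearIndependent ℝ ![u', v'] → M ⊆ Parall u' v' →
        |u.1 * v.2 - u.2 * v.1| ≤ |u'.1 * v'.2 - u'.2 * v'.1|) →
      u ∈ M ∧ -u ∈ M ∧ v ∈ M ∧ -v ∈ M) := by
  -- symmetry in pointwise form
  have hsymm' : ∀ p ∈ M, -p ∈ M := by
    intro p hp
    rw [hMsymm] at hp
    exact Set.mem_neg.mp hp
  -- 0 is interior, get a small closed ball inside M
  obtain ⟨x, hx⟩ := hMint
  obtain ⟨ε, hε, hballx⟩ := Metric.isOpen_iff.mp isOpen_interior x hx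
  have hbx : ∀ y : ℝ × ℝ, dist y x < ε → y ∈ M :=
    fun y hy => interior_subset (hballx hy)
  have hball0 : ∀ y : ℝ × ℝ, ‖y‖ < ε → y ∈ M := by
    intro y hy
    have h1 : x + y ∈ M := by
      apply hbx
      rw [dist_eq_norm]
      simpa using hy
    have h2 : -x + y ∈ M := by
      have h3 : x - y ∈ M := by
        apply hbx
        rw [dist_eq_norm]
        simpa using hy
      have h4 := hsymm' _ h3
      have h5 : -(x - y) = -x + y := by abel
      rwa [h5] at h4
    have h6 := hMconv h1 h2 (by norm_num : (0:ℝ) ≤ 1/2)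
      (by norm_num : (0:ℝ) ≤ 1/2) (by norm_num)
    have heq : (1/2 : ℝ) • (x + y) + (1/2 : ℝ) • (-x + y) = y := by module
    rwa [heq] at h6
  have hball : Metric.closedBall (0 : ℝ × ℝ) (ε / 2) ⊆ M := by
    intro p hp
    simp only [Metric.mem_closedBall, dist_zero_right] at hp
    exact hball0 p (by linarith)
  have hr : 0 < ε / 2 := by linarith
  obtain ⟨R, hR⟩ := hMcomp.isBounded.subset_closedBall 0
  -- the det2-phrased "minimal implies midpoints in M" statement
  have main2 : ∀ u v : ℝ × ℝ, det2 u v ≠ 0 → M ⊆ Parall u v →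
      (∀ u' v' : ℝ × ℝ, det2 u' v' ≠ 0 → M ⊆ Parall u' v' →
        |det2 u v| ≤ |det2 u' v'|) →
      u ∈ M ∧ -u ∈ M ∧ v ∈ M ∧ -v ∈ M := by
    intro u v hd hsub hmin
    have hv : v ∈ M :=
      min_v_mem M hMcomp hMconv hsymm' _ hr hball u v hd hsub hmin
    have hd' : det2 v u ≠ 0 := by
      rw [det2_swap]; simpa using hd
    have hsub' : M ⊆ Parall v u := by rw [← parall_comm]; exact hsub
    have hmin' : ∀ u' v' : ℝ × ℝ, det2 u' v' ≠ 0 → M ⊆ Parall u' v' →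
        |det2 v u| ≤ |det2 u' v'| := by
      intro u' v' h1 h2
      have := hmin u' v' h1 h2
      rw [det2_swap v u, abs_neg]
      exact this
    have hu : u ∈ M :=
      min_v_mem M hMcomp hMconv hsymm' _ hr hball v u hd' hsub' hmin'
    exact ⟨hu, hsymm' u hu, hv, hsymm' v hv⟩
  constructor
  · obtain ⟨u, v, h1, h2, h3⟩ := exists_min M hMcomp _ R hr hball hR
    exact ⟨u, v, (li_iff u v).mpr h1, h2, main2 u v h1 h2 h3⟩
  · intro u v hli hsub hmin
    refine main2 u v ((li_iff u v).mp hli) hsub ?_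
    intro u' v' h1 h2
    exact hmin u' v' ((li_iff u' v').mpr h1) h2
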